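/- Let k > 0, let z ≤ x̄₀ and y be reals, and let g : ℝ → ℝ be Lipschitz continuous with constant λ on the interval [z − y, x̄₀ − y]. Then for all continuous x̄, x̄' : [0,∞) → ℝ taking values in [z, x̄₀] and all t ≥ 0, e^{-kt} · | |∫₀ᵗ g(x̄(τ) − y) dτ| − |∫₀ᵗ g(x̄'(τ) − y) dτ| | ≤ (λ/k) · sup_{τ≥0} e^{-kτ}|x̄(τ) − x̄'(τ)|. -/

import Mathlib

/-- Weighted-norm estimate on the cost coefficient map: if `g` is Lipschitz
with constant `λ` on `[z − y, x̄₀ − y]`, then for continuous `x̄, x̄'` with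
values in `[z, x̄₀]` and all `t ≥ 0`,
`e^{-kt} | |∫₀ᵗ g(x̄(τ)−y)dτ| − |∫₀ᵗ g(x̄'(τ)−y)dτ| | ≤ (λ/k)‖x̄ − x̄'‖_k`. -/
theorem cost_coefficient_weighted_lipschitz (k z xbar0 y lam : ℝ)
    (hk : 0 < k) (hzx : z ≤ xbar0) (hlam : 0 ≤ lam) (g : ℝ → ℝ)
    (hglip : ∀ u ∈ Set.Icc (z - y) (xbar0 - y),
      ∀ v ∈ Set.Icc (z - y) (xbar0 - y), |g u - g v| ≤ lam * |u - v|) :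
    ∀ xbar xbar' : ℝ → ℝ,
      ContinuousOn xbar (Set.Ici 0) → ContinuousOn xbar' (Set.Ici 0) →
      (∀ t ≥ (0 : ℝ), xbar t ∈ Set.Icc z xbar0) →
      (∀ t ≥ (0 : ℝ), xbar' t ∈ Set.Icc z xbar0) →
      ∀ t ≥ (0 : ℝ),
        Real.exp (-k * t) *
          abs (|∫ τ in (0 : ℝ)..t, g (xbar τ - y)| -
            |∫ τ in (0 : ℝ)..t, g (xbar' τ - y)|)
        ≤ (lam / k) *
            sSup {v : ℝ | ∃ τ ≥ (0 : ℝ),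
              v = Real.exp (-k * τ) * |xbar τ - xbar' τ|} := by
  intro xbar xbar' hc hc' hmem hmem' t ht
  set S := {v : ℝ | ∃ τ ≥ (0 : ℝ), v = Real.exp (-k * τ) * |xbar τ - xbar' τ|} with hS
  have hbdd : BddAbove S := by
    refine ⟨xbar0 - z, ?_⟩
    rintro v ⟨τ, hτ, rfl⟩
    have h1 : Real.exp (-k * τ) ≤ 1 := by
      apply Real.exp_le_one_iff.mpr; nlinarith
    have h2 : |xbar τ - xbar' τ| ≤ xbar0 - z := by
      rw [abs_le]
      constructor <;>
        nlinarith [(hmem τ hτ).1, (hmem τ hτ).2, (hmem' τ hτ).1, (hmem' τ hτ).2]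
    calc Real.exp (-k * τ) * |xbar τ - xbar' τ| ≤ 1 * |xbar τ - xbar' τ| := by
          apply mul_le_mul_of_nonneg_right h1 (abs_nonneg _)
      _ ≤ xbar0 - z := by rw [one_mul]; exact h2
  set M := sSup S with hM
  have hmemS : Real.exp (-k * 0) * |xbar 0 - xbar' 0| ∈ S := ⟨0, le_refl 0, rfl⟩
  have hM0 : 0 ≤ M := le_trans (by positivity) (le_csSup hbdd hmemS)
  -- pointwise bound
  have hptw : ∀ τ ∈ Set.Icc (0:ℝ) t,
      |g (xbar τ - y) - g (xbar' τ - y)| ≤ lam * (Real.exp (k * τ) * M) := by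
    intro τ hτ
    have hτ0 : (0:ℝ) ≤ τ := hτ.1
    have hm1 := hmem τ hτ0
    have hm2 := hmem' τ hτ0
    have hu : xbar τ - y ∈ Set.Icc (z - y) (xbar0 - y) :=
      ⟨by linarith [hm1.1], by linarith [hm1.2]⟩
    have hv : xbar' τ - y ∈ Set.Icc (z - y) (xbar0 - y) :=
      ⟨by linarith [hm2.1], by linarith [hm2.2]⟩
    have h1 := hglip _ hu _ hv
    have h2 : (xbar τ - y) - (xbar' τ - y) = xbar τ - xbar' τ := by ring
    rw [h2] at h1
    have h3 : Real.exp (-k * τ) * |xbar τ - xbar' τ| ≤ M :=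
      le_csSup hbdd ⟨τ, hτ0, rfl⟩
    have h4 : |xbar τ - xbar' τ| ≤ Real.exp (k * τ) * M := by
      have he : Real.exp (-k * τ) * Real.exp (k * τ) = 1 := by
        rw [← Real.exp_add]; ring_nf; exact Real.exp_zero
      nlinarith [Real.exp_pos (k * τ), Real.exp_pos (-k * τ), abs_nonneg (xbar τ - xbar' τ)]
    calc |g (xbar τ - y) - g (xbar' τ - y)| ≤ lam * |xbar τ - xbar' τ| := h1
      _ ≤ lam * (Real.exp (k * τ) * M) := mul_le_mul_of_nonneg_left h4 hlam
  -- continuity of g on the interval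
  have hgcont : ContinuousOn g (Set.Icc (z - y) (xbar0 - y)) := by
    have : LipschitzOnWith ⟨lam, hlam⟩ g (Set.Icc (z - y) (xbar0 - y)) := by
      apply LipschitzOnWith.of_dist_le_mul
      intro u hu v hv
      rw [Real.dist_eq, Real.dist_eq]; exact hglip u hu v hv
    exact this.continuousOn
  have hicc : Set.uIcc (0:ℝ) t = Set.Icc (0:ℝ) t := Set.uIcc_of_le ht
  have hsub : Set.Icc (0:ℝ) t ⊆ Set.Ici (0:ℝ) := fun x hx => hx.1
  have hcomp : ∀ (f : ℝ → ℝ), ContinuousOn f (Set.Ici 0) →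
      (∀ s ≥ (0:ℝ), f s ∈ Set.Icc z xbar0) →
      ContinuousOn (fun τ => g (f τ - y)) (Set.Icc 0 t) := by
    intro f hf hfm
    apply hgcont.comp ((hf.mono hsub).sub continuousOn_const)
    intro s hs
    have h := hfm s hs.1
    simp only [Set.mem_Icc, Pi.sub_apply] at h ⊢
    constructor <;> linarith [h.1, h.2]
  have hint1 : IntervalIntegrable (fun τ => g (xbar τ - y)) MeasureTheory.volume 0 t := by
    apply ContinuousOn.intervalIntegrable; rw [hicc]; exact hcomp xbar hc hmem
  have hint2 : IntervalIntegrable (fun τ => g (xbar' τ - y)) MeasureTheory.volume 0 t := by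
    apply ContinuousOn.intervalIntegrable; rw [hicc]; exact hcomp xbar' hc' hmem'
  have hintb : IntervalIntegrable (fun τ => lam * (Real.exp (k * τ) * M)) MeasureTheory.volume 0 t := by
    exact (Continuous.intervalIntegrable (continuous_const.mul ((Real.continuous_exp.comp (continuous_const.mul continuous_id)).mul continuous_const)) 0 t)
  have hintd : IntervalIntegrable (fun τ => |g (xbar τ - y) - g (xbar' τ - y)|) MeasureTheory.volume 0 t :=
    (hint1.sub hint2).abs
  -- the integral of the bound
  have hexpint : (∫ τ in (0:ℝ)..t, Real.exp (k * τ)) = (Real.exp (k * t) - 1) / k := by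
    have h := intervalIntegral.integral_comp_mul_left (a := (0:ℝ)) (b := t) Real.exp (ne_of_gt hk)
    rw [h]
    simp [integral_exp]
    field_simp
  have hbint : (∫ τ in (0:ℝ)..t, lam * (Real.exp (k * τ) * M)) = lam * M * ((Real.exp (k * t) - 1) / k) := by
    have : ∀ τ : ℝ, lam * (Real.exp (k * τ) * M) = (lam * M) * Real.exp (k * τ) := by
      intro τ; ring
    simp_rw [this]
    rw [intervalIntegral.integral_const_mul, hexpint]
  -- main chain
  have hchain : |(|∫ τ in (0:ℝ)..t, g (xbar τ - y)| - |∫ τ in (0:ℝ)..t, g (xbar' τ - y)|)|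
      ≤ lam * M * ((Real.exp (k * t) - 1) / k) := by
    calc |(|∫ τ in (0:ℝ)..t, g (xbar τ - y)| - |∫ τ in (0:ℝ)..t, g (xbar' τ - y)|)|
        ≤ |(∫ τ in (0:ℝ)..t, g (xbar τ - y)) - (∫ τ in (0:ℝ)..t, g (xbar' τ - y))| :=
          abs_abs_sub_abs_le_abs_sub _ _
      _ = |∫ τ in (0:ℝ)..t, (g (xbar τ - y) - g (xbar' τ - y))| := by
          rw [intervalIntegral.integral_sub hint1 hint2]
      _ ≤ ∫ τ in (0:ℝ)..t, |g (xbar τ - y) - g (xbar' τ - y)| := by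
          apply intervalIntegral.abs_integral_le_integral_abs ht
      _ ≤ ∫ τ in (0:ℝ)..t, lam * (Real.exp (k * τ) * M) := by
          apply intervalIntegral.integral_mono_on ht hintd hintb
          intro τ hτ; exact hptw τ hτ
      _ = lam * M * ((Real.exp (k * t) - 1) / k) := hbint
  have hee : Real.exp (-k * t) * Real.exp (k * t) = 1 := by
    rw [← Real.exp_add]; ring_nf; exact Real.exp_zero
  have hep := Real.exp_pos (-k * t)
  have hep2 := Real.exp_pos (k * t)
  calc Real.exp (-k * t) * |(|∫ τ in (0:ℝ)..t, g (xbar τ - y)| - |∫ τ in (0:ℝ)..t, g (xbar' τ - y)|)|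
      ≤ Real.exp (-k * t) * (lam * M * ((Real.exp (k * t) - 1) / k)) :=
        mul_le_mul_of_nonneg_left hchain (le_of_lt hep)
    _ ≤ (lam / k) * M := by
        have hkey : Real.exp (-k * t) * (lam * M * ((Real.exp (k * t) - 1) / k))
            = (lam * M * (Real.exp (-k * t) * (Real.exp (k * t) - 1))) / k := by ring
        rw [hkey, div_le_iff₀ hk]
        have h2 : lam / k * M * k = lam * M := by field_simp
        rw [h2]
        nlinarith [mul_nonneg hlam hM0, hee, hep.le]
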